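/- arXiv:2310.08969 — 4 statements merged into one kernel-verified Lean document; each statement's English description precedes it below -/
import Mathlib

section
/- Invariance principle for the modified nonlinear Schrödinger subproblem: Let d ≥ 1, let V ∈ C²(ℝ^d, ℝ), let ϑ, β₁, β₂ ∈ ℝ and τ > 0. Suppose ψ : ℝ^d × [0, τ] → ℂ is jointly of class C³ and satisfies the evolution equation ∂ₜψ(x,t) = − i · f(ψ(·,t))(x) · ψ(x,t) for all (x,t) ∈ ℝ^d × [0, τ]. Then f(ψ(·,t))(x) = f(ψ(·,0))(x) for all x ∈ ℝ^d and all t ∈ [0, τ]. -/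
open Complex

/-- `j`-th partial derivative of a complex-valued function on `ℝ^d`. -/
noncomputable def pdC {d : ℕ} (j : Fin d) (w : (Fin d → ℝ) → ℂ) (x : Fin d → ℝ) : ℂ :=
  fderiv ℝ w x (Pi.single j 1)

/-- Laplacian of a complex-valued function on `ℝ^d`. -/
noncomputable def lapC {d : ℕ} (w : (Fin d → ℝ) → ℂ) (x : Fin d → ℝ) : ℂ :=
  ∑ j, pdC j (fun y => pdC j w y) x

/-- Gradient dot product `∇w·∇z` of complex-valued functions on `ℝ^d`. -/
noncomputable def gdotC {d : ℕ} (w z : (Fin d → ℝ) → ℂ) (x : Fin d → ℝ) : ℂ :=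
  ∑ j, pdC j w x * pdC j z x

/-- `j`-th partial derivative of a real-valued function on `ℝ^d`. -/
noncomputable def pdR {d : ℕ} (j : Fin d) (w : (Fin d → ℝ) → ℝ) (x : Fin d → ℝ) : ℝ :=
  fderiv ℝ w x (Pi.single j 1)

/-- Laplacian of a real-valued function on `ℝ^d`. -/
noncomputable def lapR {d : ℕ} (w : (Fin d → ℝ) → ℝ) (x : Fin d → ℝ) : ℝ :=
  ∑ j, pdR j (fun y => pdR j w y) x

/-- Gradient dot product `∇w·∇z` of real-valued functions on `ℝ^d`. -/
noncomputable def gdotR {d : ℕ} (w z : (Fin d → ℝ) → ℝ) (x : Fin d → ℝ) : ℝ :=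
  ∑ j, pdR j w x * pdR j z x

/-- The modified potential
`f(v) = β₁ (V + ϑ|v|²) + β₂ τ² (2|∇V|² − 4ϑ g₆(v))` with
`g₆(v) = |v|²(ΔV + ϑ(2 Re(v̄Δv) + 3 ∇v̄·∇v)) + ϑ Re(v̄² ∇v·∇v)`. -/
noncomputable def modf {d : ℕ} (V : (Fin d → ℝ) → ℝ) (ϑ β₁ β₂ τ : ℝ)
    (v : (Fin d → ℝ) → ℂ) (x : Fin d → ℝ) : ℝ :=
  let g1 : ℝ := Complex.normSq (v x)
  let g2 : ℝ := ((starRingEnd ℂ) (v x) * lapC v x).re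
  let g3 : ℝ := (gdotC (fun y => (starRingEnd ℂ) (v y)) v x).re
  let g4 : ℝ := (((starRingEnd ℂ) (v x)) ^ 2 * gdotC v v x).re
  let g5 : ℝ := ϑ * (2 * g2 + 3 * g3)
  let g6 : ℝ := g1 * (lapR V x + g5) + ϑ * g4
  let f1 : ℝ := V x + ϑ * g1
  let f2 : ℝ := 2 * gdotR V V x - 4 * ϑ * g6
  β₁ * f1 + β₂ * τ ^ 2 * f2


namespace Inv

open Complex

variable {d : ℕ}

lemma pdC_congr (j : Fin d) {f g : (Fin d → ℝ) → ℂ} {x : Fin d → ℝ}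
    (h : f =ᶠ[nhds x] g) : pdC j f x = pdC j g x := by
  unfold pdC; rw [h.fderiv_eq]

lemma pdC_mul (j : Fin d) {f g : (Fin d → ℝ) → ℂ} {x : Fin d → ℝ}
    (hf : DifferentiableAt ℝ f x) (hg : DifferentiableAt ℝ g x) :
    pdC j (fun y => f y * g y) x = f x * pdC j g x + g x * pdC j f x := by
  unfold pdC
  rw [fderiv_fun_mul hf hg]
  simp [smul_eq_mul]

lemma pdC_add (j : Fin d) {f g : (Fin d → ℝ) → ℂ} {x : Fin d → ℝ}
    (hf : DifferentiableAt ℝ f x) (hg : DifferentiableAt ℝ g x) :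
    pdC j (fun y => f y + g y) x = pdC j f x + pdC j g x := by
  unfold pdC
  rw [fderiv_fun_add hf hg]; rfl

lemma pdC_const (j : Fin d) (c : ℂ) (x : Fin d → ℝ) :
    pdC j (fun _ => c) x = 0 := by
  unfold pdC; rw [fderiv_fun_const]; rfl

lemma pdC_conj (j : Fin d) {f : (Fin d → ℝ) → ℂ} {x : Fin d → ℝ}
    (hf : DifferentiableAt ℝ f x) :
    pdC j (fun y => (starRingEnd ℂ) (f y)) x = (starRingEnd ℂ) (pdC j f x) := by
  unfold pdC
  have h : fderiv ℝ (fun y => (starRingEnd ℂ) (f y)) x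
      = (Complex.conjCLE.toContinuousLinearMap).comp (fderiv ℝ f x) :=
    (Complex.conjCLE.toContinuousLinearMap.hasFDerivAt.comp x hf.hasFDerivAt).fderiv
  rw [h]; rfl

lemma differentiableAt_conj {f : (Fin d → ℝ) → ℂ} {x : Fin d → ℝ}
    (hf : DifferentiableAt ℝ f x) :
    DifferentiableAt ℝ (fun y => (starRingEnd ℂ) (f y)) x :=
  (Complex.conjCLE.differentiable.differentiableAt).comp x hf

lemma contDiffOn_pdC (j : Fin d) {w : (Fin d → ℝ) → ℂ} {U : Set (Fin d → ℝ)}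
    (hU : IsOpen U) {m n : ℕ} (hw : ContDiffOn ℝ n w U) (h : m + 1 ≤ n) :
    ContDiffOn ℝ m (fun y => pdC j w y) U := by
  have h1 : ContDiffOn ℝ m (fderiv ℝ w) U := hw.fderiv_of_isOpen hU (by exact_mod_cast h)
  exact h1.clm_apply contDiffOn_const

lemma contDiff_pdC (j : Fin d) {w : (Fin d → ℝ) → ℂ}
    (hw : ContDiff ℝ 3 w) : ContDiff ℝ 2 (fun y => pdC j w y) := by
  have h1 : ContDiff ℝ 2 (fderiv ℝ w) := hw.fderiv_right (by norm_num)
  exact h1.clm_apply contDiff_const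

lemma re_eq_of (p q : ℂ) (h : p + (starRingEnd ℂ) p = q + (starRingEnd ℂ) q) : p.re = q.re := by
  have h1 := congrArg Complex.re h
  simp only [Complex.add_re, Complex.conj_re] at h1
  linarith

lemma modf_eq {d : ℕ} (V : (Fin d → ℝ) → ℝ) (ϑ β₁ β₂ τ : ℝ)
    (v : (Fin d → ℝ) → ℂ) (x : Fin d → ℝ) :
    modf V ϑ β₁ β₂ τ v x
      = β₁ * (V x + ϑ * Complex.normSq (v x))
        + β₂ * τ ^ 2 * (2 * gdotR V V x
          - 4 * ϑ * (Complex.normSq (v x) * (lapR V x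
              + ϑ * (2 * ((starRingEnd ℂ) (v x) * lapC v x).re
                + 3 * (gdotC (fun y => (starRingEnd ℂ) (v y)) v x).re))
            + ϑ * (((starRingEnd ℂ) (v x)) ^ 2 * gdotC v v x).re)) := rfl

lemma gdotC_eq {d : ℕ} (w z : (Fin d → ℝ) → ℂ) (x : Fin d → ℝ) :
    gdotC w z x = ∑ j, pdC j w x * pdC j z x := rfl

lemma lapC_eq {d : ℕ} (w : (Fin d → ℝ) → ℂ) (x : Fin d → ℝ) :
    lapC w x = ∑ j, pdC j (fun y => pdC j w y) x := rfl

set_option maxHeartbeats 1000000 in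
lemma key_alg {n : ℕ} (A Z C L : ℂ) (B W : Fin n → ℂ)
    (hZ : Z * (starRingEnd ℂ) Z = 1)
    (hW : ∀ j, (starRingEnd ℂ) Z * W j + Z * (starRingEnd ℂ) (W j) = 0)
    (hL : (starRingEnd ℂ) Z * L + Z * (starRingEnd ℂ) L
        + 2 * ∑ j, W j * (starRingEnd ℂ) (W j) = 0) :
    normSq (A * Z) * (2 * ((starRingEnd ℂ) (A * Z) * (Z * C + A * L + 2 * ∑ j, B j * W j)).re
        + 3 * (∑ j, (starRingEnd ℂ) (A * W j + Z * B j) * (A * W j + Z * B j)).re)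
      + (((starRingEnd ℂ) (A * Z)) ^ 2 * (∑ j, (A * W j + Z * B j) * (A * W j + Z * B j))).re
    = normSq A * (2 * ((starRingEnd ℂ) A * C).re + 3 * (∑ j, (starRingEnd ℂ) (B j) * B j).re)
      + (((starRingEnd ℂ) A) ^ 2 * (∑ j, B j * B j)).re := by
  have hW' : ∀ j, (starRingEnd ℂ) (W j) = -((starRingEnd ℂ) Z ^ 2 * W j) := by
    intro j
    linear_combination (starRingEnd ℂ) Z * hW j - (starRingEnd ℂ) (W j) * hZ
  set sWW := ∑ j, W j * W j with hsWW
  set sWB := ∑ j, W j * B j with hsWB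
  set sWBb := ∑ j, W j * (starRingEnd ℂ) (B j) with hsWBb
  set sBbB := ∑ j, (starRingEnd ℂ) (B j) * B j with hsBbB
  set sBB := ∑ j, B j * B j with hsBB
  set sBbBb := ∑ j, (starRingEnd ℂ) (B j) * (starRingEnd ℂ) (B j) with hsBbBb
  have e : ∑ j, W j * (starRingEnd ℂ) (W j) = -((starRingEnd ℂ) Z ^ 2 * sWW) := by
    have e1 : ∀ j : Fin n, W j * (starRingEnd ℂ) (W j)
        = -((starRingEnd ℂ) Z ^ 2 * (W j * W j)) := fun j => by rw [hW' j]; ring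
    rw [Finset.sum_congr rfl fun j _ => e1 j]
    simp only [Finset.sum_neg_distrib, ← Finset.mul_sum, ← hsWW]
  have hL' : (starRingEnd ℂ) L
      = -((starRingEnd ℂ) Z ^ 2 * L) + 2 * (starRingEnd ℂ) Z ^ 3 * sWW := by
    linear_combination (starRingEnd ℂ) Z * hL - (starRingEnd ℂ) L * hZ
      - 2 * (starRingEnd ℂ) Z * e
  have eBW : ∑ j, B j * W j = sWB := by
    rw [hsWB]; exact Finset.sum_congr rfl fun j _ => mul_comm _ _
  have eS3 : ∑ j, (starRingEnd ℂ) (A * W j + Z * B j) * (A * W j + Z * B j)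
      = -((starRingEnd ℂ) A * A * (starRingEnd ℂ) Z ^ 2) * sWW
        - ((starRingEnd ℂ) A * Z * (starRingEnd ℂ) Z ^ 2) * sWB
        + (A * (starRingEnd ℂ) Z) * sWBb + (Z * (starRingEnd ℂ) Z) * sBbB := by
    have e1 : ∀ j : Fin n, (starRingEnd ℂ) (A * W j + Z * B j) * (A * W j + Z * B j)
        = -((starRingEnd ℂ) A * A * (starRingEnd ℂ) Z ^ 2) * (W j * W j)
          - ((starRingEnd ℂ) A * Z * (starRingEnd ℂ) Z ^ 2) * (W j * B j)
          + (A * (starRingEnd ℂ) Z) * (W j * (starRingEnd ℂ) (B j))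
          + (Z * (starRingEnd ℂ) Z) * ((starRingEnd ℂ) (B j) * B j) := by
      intro j; simp only [map_add, map_mul, hW' j]; ring
    rw [Finset.sum_congr rfl fun j _ => e1 j]
    simp only [Finset.sum_add_distrib, Finset.sum_sub_distrib, ← Finset.mul_sum,
      ← hsWW, ← hsWB, ← hsWBb, ← hsBbB]
  have eS4 : ∑ j, (A * W j + Z * B j) * (A * W j + Z * B j)
      = A ^ 2 * sWW + 2 * A * Z * sWB + Z ^ 2 * sBB := by
    have e1 : ∀ j : Fin n, (A * W j + Z * B j) * (A * W j + Z * B j)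
        = A ^ 2 * (W j * W j) + 2 * A * Z * (W j * B j) + Z ^ 2 * (B j * B j) := by
      intro j; ring
    rw [Finset.sum_congr rfl fun j _ => e1 j]
    simp only [Finset.sum_add_distrib, ← Finset.mul_sum, ← hsWW, ← hsWB, ← hsBB]
  have hcWW : (starRingEnd ℂ) sWW = (starRingEnd ℂ) Z ^ 4 * sWW := by
    rw [hsWW, map_sum]
    have e1 : ∀ j : Fin n, (starRingEnd ℂ) (W j * W j)
        = (starRingEnd ℂ) Z ^ 4 * (W j * W j) := by
      intro j; rw [map_mul, hW' j]; ring
    rw [Finset.sum_congr rfl fun j _ => e1 j, ← Finset.mul_sum]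
  have hcWB : (starRingEnd ℂ) sWB = -((starRingEnd ℂ) Z ^ 2 * sWBb) := by
    rw [hsWB, map_sum]
    have e1 : ∀ j : Fin n, (starRingEnd ℂ) (W j * B j)
        = -((starRingEnd ℂ) Z ^ 2 * (W j * (starRingEnd ℂ) (B j))) := by
      intro j; rw [map_mul, hW' j]; ring
    rw [Finset.sum_congr rfl fun j _ => e1 j]
    simp only [Finset.sum_neg_distrib, ← Finset.mul_sum, ← hsWBb]
  have hcWBb : (starRingEnd ℂ) sWBb = -((starRingEnd ℂ) Z ^ 2 * sWB) := by
    rw [hsWBb, map_sum]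
    have e1 : ∀ j : Fin n, (starRingEnd ℂ) (W j * (starRingEnd ℂ) (B j))
        = -((starRingEnd ℂ) Z ^ 2 * (W j * B j)) := by
      intro j; rw [map_mul, hW' j, Complex.conj_conj]; ring
    rw [Finset.sum_congr rfl fun j _ => e1 j]
    simp only [Finset.sum_neg_distrib, ← Finset.mul_sum, ← hsWB]
  have hcBbB : (starRingEnd ℂ) sBbB = sBbB := by
    rw [hsBbB, map_sum]
    exact Finset.sum_congr rfl fun j _ => by rw [map_mul, Complex.conj_conj]; ring
  have hcBB : (starRingEnd ℂ) sBB = sBbBb := by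
    rw [hsBB, hsBbBb, map_sum]
    exact Finset.sum_congr rfl fun j _ => by rw [map_mul]
  have hcBbBb : (starRingEnd ℂ) sBbBb = sBB := by
    rw [hsBB, hsBbBb, map_sum]
    exact Finset.sum_congr rfl fun j _ => by rw [map_mul, Complex.conj_conj]
  rw [eBW, eS3, eS4]
  have hnsZ : Complex.normSq Z = 1 := by
    have h1 := Complex.mul_conj Z
    rw [hZ] at h1
    exact_mod_cast h1.symm
  rw [Complex.normSq_mul, hnsZ, mul_one]
  have re_comb : ∀ (r : ℝ) (p q w : ℂ), r * (2 * p.re + 3 * q.re) + w.re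
      = (((r : ℂ)) * (2 * p + 3 * q) + w).re := by
    intro r p q w
    simp only [Complex.add_re, Complex.mul_re, Complex.ofReal_re, Complex.ofReal_im,
      Complex.re_ofNat, Complex.im_ofNat]
    ring
  rw [re_comb, re_comb]
  apply re_eq_of
  simp only [map_add, map_mul, map_pow, map_neg, map_sub, map_ofNat,
    Complex.conj_conj, Complex.conj_ofReal, hL', hcWW, hcWB, hcWBb, hcBbB, hcBB, hcBbBb]
  simp only [← Complex.mul_conj]
  linear_combination ((2) * A * C * (starRingEnd ℂ) A ^ 2
   + (-4) * A * (starRingEnd ℂ) Z * (starRingEnd ℂ) A ^ 2 * sWB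
   + (6) * A * (starRingEnd ℂ) A * sBbB
   + (-2) * A ^ 2 * L * (starRingEnd ℂ) Z * (starRingEnd ℂ) A ^ 2
   + (1) * A ^ 2 * (starRingEnd ℂ) Z * Z * sBbBb
   + (-3) * A ^ 2 * (starRingEnd ℂ) Z * (starRingEnd ℂ) A * sWBb
   + (1) * A ^ 2 * (starRingEnd ℂ) Z ^ 2 * Z * (starRingEnd ℂ) A * sWBb
   + (2) * A ^ 2 * (starRingEnd ℂ) Z ^ 2 * (starRingEnd ℂ) A ^ 2 * sWW
   + (-2) * A ^ 2 * (starRingEnd ℂ) Z ^ 3 * Z * (starRingEnd ℂ) A ^ 2 * sWW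
   + (2) * A ^ 2 * (starRingEnd ℂ) A * (starRingEnd ℂ) C
   + (1) * A ^ 2 * sBbBb
   + (1) * (starRingEnd ℂ) Z * Z * (starRingEnd ℂ) A ^ 2 * sBB
   + (1) * (starRingEnd ℂ) A ^ 2 * sBB) * hZ


set_option maxHeartbeats 1000000 in
lemma modf_gauge {d : ℕ} (V : (Fin d → ℝ) → ℝ) (ϑ β₁ β₂ τ : ℝ)
    {a u z : (Fin d → ℝ) → ℂ} {U : Set (Fin d → ℝ)} (hU : IsOpen U)
    (ha : ContDiff ℝ 3 a) (hz : ContDiffOn ℝ 3 z U)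
    (huz : ∀ y ∈ U, u y = a y * z y)
    (hz1 : ∀ y ∈ U, z y * (starRingEnd ℂ) (z y) = 1)
    {x : Fin d → ℝ} (hx : x ∈ U) :
    modf V ϑ β₁ β₂ τ u x = modf V ϑ β₁ β₂ τ a x := by
  -- differentiability facts
  have hdz : ∀ y ∈ U, DifferentiableAt ℝ z y := fun y hy =>
    (hz.contDiffAt (hU.mem_nhds hy)).differentiableAt (by norm_num)
  have hda : ∀ y, DifferentiableAt ℝ a y := fun y =>
    (ha.differentiable (by norm_num)) y
  have hpz : ∀ j : Fin d, ContDiffOn ℝ 2 (fun y => pdC j z y) U := fun j =>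
    contDiffOn_pdC j hU hz (by norm_num)
  have hdpz : ∀ (j : Fin d), ∀ y ∈ U, DifferentiableAt ℝ (fun y => pdC j z y) y := fun j y hy =>
    ((hpz j).contDiffAt (hU.mem_nhds hy)).differentiableAt (by norm_num)
  have hdpa : ∀ (j : Fin d) (y : Fin d → ℝ), DifferentiableAt ℝ (fun y => pdC j a y) y :=
    fun j y => ((contDiff_pdC j ha).differentiable (by norm_num)) y
  have huz_ev : ∀ y ∈ U, u =ᶠ[nhds y] fun y' => a y' * z y' := fun y hy =>
    Filter.eventuallyEq_of_mem (hU.mem_nhds hy) fun y' hy' => huz y' hy'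
  have hdu : ∀ y ∈ U, DifferentiableAt ℝ u y := fun y hy =>
    (Filter.EventuallyEq.differentiableAt_iff (huz_ev y hy)).mpr ((hda y).mul (hdz y hy))
  -- first derivatives of u
  have hB : ∀ (j : Fin d), ∀ y ∈ U, pdC j u y = a y * pdC j z y + z y * pdC j a y := by
    intro j y hy
    rw [pdC_congr j (huz_ev y hy), pdC_mul j (hda y) (hdz y hy)]
  -- Laplacian of u
  have hC : lapC u x = z x * lapC a x + a x * lapC z x + 2 * ∑ j, pdC j a x * pdC j z x := by
    have hBev : ∀ j : Fin d, (fun y => pdC j u y)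
        =ᶠ[nhds x] (fun y => a y * pdC j z y + z y * pdC j a y) := fun j =>
      Filter.eventuallyEq_of_mem (hU.mem_nhds hx) fun y hy => hB j y hy
    have hj : ∀ j : Fin d, pdC j (fun y => pdC j u y) x
        = z x * pdC j (fun y => pdC j a y) x + a x * pdC j (fun y => pdC j z y) x
          + 2 * (pdC j a x * pdC j z x) := by
      intro j
      have d1 : DifferentiableAt ℝ (fun y => a y * pdC j z y) x := (hda x).mul (hdpz j x hx)
      have d2 : DifferentiableAt ℝ (fun y => z y * pdC j a y) x := (hdz x hx).mul (hdpa j x)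
      rw [pdC_congr j (hBev j), pdC_add j d1 d2, pdC_mul j (hda x) (hdpz j x hx),
        pdC_mul j (hdz x hx) (hdpa j x)]
      ring
    rw [lapC_eq, Finset.sum_congr rfl fun j _ => hj j]
    simp only [Finset.sum_add_distrib, ← Finset.mul_sum]
    rw [lapC_eq, lapC_eq]
  -- first-order constraint from |z| = 1
  have hW1 : ∀ y ∈ U, ∀ j : Fin d,
      (starRingEnd ℂ) (z y) * pdC j z y + z y * (starRingEnd ℂ) (pdC j z y) = 0 := by
    intro y hy j
    have hev : (fun y' => z y' * (starRingEnd ℂ) (z y')) =ᶠ[nhds y] (fun _ => (1 : ℂ)) :=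
      Filter.eventuallyEq_of_mem (hU.mem_nhds hy) fun y' hy' => hz1 y' hy'
    have h1 : pdC j (fun y' => z y' * (starRingEnd ℂ) (z y')) y = 0 := by
      rw [pdC_congr j hev, pdC_const]
    rw [pdC_mul j (hdz y hy) (differentiableAt_conj (hdz y hy)), pdC_conj j (hdz y hy)] at h1
    linear_combination h1
  -- second-order constraint
  have hLx : (starRingEnd ℂ) (z x) * lapC z x + z x * (starRingEnd ℂ) (lapC z x)
      + 2 * ∑ j, pdC j z x * (starRingEnd ℂ) (pdC j z x) = 0 := by
    have hL1 : ∀ j : Fin d, (starRingEnd ℂ) (z x) * pdC j (fun y => pdC j z y) x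
        + z x * (starRingEnd ℂ) (pdC j (fun y => pdC j z y) x)
        + 2 * (pdC j z x * (starRingEnd ℂ) (pdC j z x)) = 0 := by
      intro j
      have hev : (fun y => (starRingEnd ℂ) (z y) * pdC j z y
          + z y * (starRingEnd ℂ) (pdC j z y)) =ᶠ[nhds x] (fun _ => (0 : ℂ)) :=
        Filter.eventuallyEq_of_mem (hU.mem_nhds hx) fun y hy => hW1 y hy j
      have h1 : pdC j (fun y => (starRingEnd ℂ) (z y) * pdC j z y
          + z y * (starRingEnd ℂ) (pdC j z y)) x = 0 := by
        rw [pdC_congr j hev, pdC_const]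
      have d1 : DifferentiableAt ℝ (fun y => (starRingEnd ℂ) (z y) * pdC j z y) x :=
        (differentiableAt_conj (hdz x hx)).mul (hdpz j x hx)
      have d2 : DifferentiableAt ℝ (fun y => z y * (starRingEnd ℂ) (pdC j z y)) x :=
        (hdz x hx).mul (differentiableAt_conj (hdpz j x hx))
      rw [pdC_add j d1 d2,
        pdC_mul j (differentiableAt_conj (hdz x hx)) (hdpz j x hx),
        pdC_mul j (hdz x hx) (differentiableAt_conj (hdpz j x hx)),
        pdC_conj j (hdz x hx), pdC_conj j (hdpz j x hx)] at h1
      linear_combination h1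
    have h2 : ∑ j, ((starRingEnd ℂ) (z x) * pdC j (fun y => pdC j z y) x
        + z x * (starRingEnd ℂ) (pdC j (fun y => pdC j z y) x)
        + 2 * (pdC j z x * (starRingEnd ℂ) (pdC j z x))) = 0 :=
      Finset.sum_eq_zero fun j _ => hL1 j
    rw [Finset.sum_add_distrib, Finset.sum_add_distrib, ← Finset.mul_sum, ← Finset.mul_sum,
      ← Finset.mul_sum] at h2
    rw [lapC_eq, map_sum]
    linear_combination h2
  -- assemble
  have hZx : z x * (starRingEnd ℂ) (z x) = 1 := hz1 x hx
  have hWx : ∀ j : Fin d, (starRingEnd ℂ) (z x) * pdC j z x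
      + z x * (starRingEnd ℂ) (pdC j z x) = 0 := hW1 x hx
  have e_ux : u x = a x * z x := huz x hx
  have e_g2u : (starRingEnd ℂ) (u x) * lapC u x
      = (starRingEnd ℂ) (a x * z x) * (z x * lapC a x + a x * lapC z x
          + 2 * ∑ j, pdC j a x * pdC j z x) := by rw [e_ux, hC]
  have e_g3u : gdotC (fun y => (starRingEnd ℂ) (u y)) u x
      = ∑ j, (starRingEnd ℂ) (a x * pdC j z x + z x * pdC j a x)
          * (a x * pdC j z x + z x * pdC j a x) := by
    rw [gdotC_eq]
    exact Finset.sum_congr rfl fun j _ => by rw [pdC_conj j (hdu x hx), hB j x hx]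
  have e_g4u : gdotC u u x
      = ∑ j, (a x * pdC j z x + z x * pdC j a x) * (a x * pdC j z x + z x * pdC j a x) := by
    rw [gdotC_eq]
    exact Finset.sum_congr rfl fun j _ => by rw [hB j x hx]
  have e_g3a : gdotC (fun y => (starRingEnd ℂ) (a y)) a x
      = ∑ j, (starRingEnd ℂ) (pdC j a x) * pdC j a x := by
    rw [gdotC_eq]
    exact Finset.sum_congr rfl fun j _ => by rw [pdC_conj j (hda x)]
  have hg1 : Complex.normSq (a x * z x) = Complex.normSq (a x) := by
    have hnsz : Complex.normSq (z x) = 1 := by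
      have h1 := Complex.mul_conj (z x)
      rw [hZx] at h1
      exact_mod_cast h1.symm
    rw [Complex.normSq_mul, hnsz, mul_one]
  have key := key_alg (a x) (z x) (lapC a x) (lapC z x)
    (fun j => pdC j a x) (fun j => pdC j z x) hZx hWx hLx
  beta_reduce at key
  rw [modf_eq, modf_eq, hC, e_g3u, e_g4u, e_g3a, gdotC_eq a a x, e_ux]
  linear_combination (β₁ * ϑ - 4 * β₂ * τ ^ 2 * ϑ * lapR V x) * hg1
    - (4 * β₂ * τ ^ 2 * ϑ ^ 2) * key

end Inv

/-- **Invariance principle** for the modified nonlinear Schrödinger subproblem: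
if `∂ₜψ = − i f(ψ(·,t)) ψ` on `ℝ^d × [0,τ]`, then `f(ψ(·,t)) = f(ψ(·,0))`. -/
theorem invariance_principle {d : ℕ} (hd : 1 ≤ d)
    (V : (Fin d → ℝ) → ℝ) (hV : ContDiff ℝ 2 V)
    (ϑ β₁ β₂ τ : ℝ) (hτ : 0 < τ)
    (ψ : (Fin d → ℝ) → ℝ → ℂ)
    (hψ : ContDiffOn ℝ 3 (fun p : (Fin d → ℝ) × ℝ => ψ p.1 p.2)
      (Set.univ ×ˢ Set.Icc 0 τ))
    (heq : ∀ (x : Fin d → ℝ), ∀ t ∈ Set.Icc (0 : ℝ) τ,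
      HasDerivWithinAt (fun s => ψ x s)
        (- Complex.I * (modf V ϑ β₁ β₂ τ (fun y => ψ y t) x : ℂ) * ψ x t)
        (Set.Icc 0 τ) t) :
    ∀ (x : Fin d → ℝ), ∀ t ∈ Set.Icc (0 : ℝ) τ,
      modf V ϑ β₁ β₂ τ (fun y => ψ y t) x = modf V ϑ β₁ β₂ τ (fun y => ψ y 0) x := by
  intro x t ht
  have h0Icc : (0 : ℝ) ∈ Set.Icc (0 : ℝ) τ := ⟨le_rfl, hτ.le⟩
  -- slices in space are C³
  have hslice : ∀ s ∈ Set.Icc (0 : ℝ) τ, ContDiff ℝ 3 (fun y => ψ y s) := by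
    intro s hs
    rw [← contDiffOn_univ]
    have hmap : Set.MapsTo (fun y : Fin d → ℝ => (y, s)) Set.univ
        (Set.univ ×ˢ Set.Icc (0 : ℝ) τ) := fun y _ => ⟨trivial, hs⟩
    exact hψ.comp ((contDiff_id.prodMk contDiff_const).contDiffOn) hmap
  -- pointwise conservation of |ψ|²
  have hnorm : ∀ y, ψ y t * (starRingEnd ℂ) (ψ y t) = ψ y 0 * (starRingEnd ℂ) (ψ y 0) := by
    intro y
    have hD : ∀ s ∈ Set.Icc (0 : ℝ) τ,
        HasDerivWithinAt (fun r => ψ y r * (starRingEnd ℂ) (ψ y r)) 0 (Set.Icc 0 τ) s := by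
      intro s hs
      have h1 := heq y s hs
      have h3 := h1.mul h1.star
      convert h3 using 1
      all_goals try rfl
      simp only [RCLike.star_def, Complex.star_def, map_mul, map_neg, Complex.conj_I, Complex.conj_ofReal]
      ring
    have hcont : ContinuousOn (fun r => ψ y r * (starRingEnd ℂ) (ψ y r)) (Set.Icc 0 τ) :=
      fun s hs => (hD s hs).continuousWithinAt
    have hconst := constant_of_has_deriv_right_zero hcont (fun s hs =>
      (hD s ⟨hs.1, hs.2.le⟩).mono_of_mem_nhdsWithin (Icc_mem_nhdsGE_of_mem hs))
    exact hconst t ht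
  by_cases h0 : ψ x 0 = 0
  · -- at a zero of ψ(·,0) both sides reduce to the same expression
    have ht0 : ψ x t = 0 := by
      have h := hnorm x
      rw [h0] at h
      simp only [map_zero, mul_zero] at h
      have h2 : Complex.normSq (ψ x t) = 0 := by
        have h3 := Complex.mul_conj (ψ x t)
        rw [h] at h3
        exact_mod_cast h3.symm
      exact Complex.normSq_eq_zero.mp h2
    simp only [Inv.modf_eq, ht0, h0, map_zero, Complex.normSq_zero, mul_zero, zero_mul,
      ne_eq, OfNat.ofNat_ne_zero, not_false_eq_true, zero_pow, add_zero, zero_add]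
  · -- gauge argument on the open set where ψ(·,0) ≠ 0
    have hUopen : IsOpen {y : Fin d → ℝ | ψ y 0 ≠ 0} := by
      have : {y : Fin d → ℝ | ψ y 0 ≠ 0} = (fun y => ψ y 0) ⁻¹' ({0}ᶜ) := rfl
      rw [this]
      exact (isOpen_compl_singleton).preimage ((hslice 0 h0Icc).continuous)
    have ha := hslice 0 h0Icc
    have hu := hslice t ht
    have hne : ∀ y ∈ {y : Fin d → ℝ | ψ y 0 ≠ 0}, ψ y 0 ≠ 0 := fun y hy => hy
    have hzz : ContDiffOn ℝ 3 (fun y => ψ y t * (ψ y 0)⁻¹) {y : Fin d → ℝ | ψ y 0 ≠ 0} :=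
      hu.contDiffOn.mul (ha.contDiffOn.inv hne)
    have huz : ∀ y ∈ {y : Fin d → ℝ | ψ y 0 ≠ 0}, ψ y t = ψ y 0 * (ψ y t * (ψ y 0)⁻¹) := by
      intro y hy
      rw [mul_comm (ψ y t) ((ψ y 0)⁻¹), ← mul_assoc, mul_inv_cancel₀ hy, one_mul]
    have hz1 : ∀ y ∈ {y : Fin d → ℝ | ψ y 0 ≠ 0},
        (ψ y t * (ψ y 0)⁻¹) * (starRingEnd ℂ) (ψ y t * (ψ y 0)⁻¹) = 1 := by
      intro y hy
      have hcne : (starRingEnd ℂ) (ψ y 0) ≠ 0 := (map_ne_zero (starRingEnd ℂ)).mpr hy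
      rw [map_mul, map_inv₀]
      rw [show ψ y t * (ψ y 0)⁻¹ * ((starRingEnd ℂ) (ψ y t) * ((starRingEnd ℂ) (ψ y 0))⁻¹)
          = (ψ y t * (starRingEnd ℂ) (ψ y t)) * ((ψ y 0) * (starRingEnd ℂ) (ψ y 0))⁻¹ by
        rw [mul_inv]; ring, hnorm y]
      exact mul_inv_cancel₀ (mul_ne_zero hy hcne)
    exact Inv.modf_gauge V ϑ β₁ β₂ τ hUopen ha hzz huz hz1 h0
end

section
/- Combined cancellation identity: Let d ≥ 1, let f : ℝ^d → ℝ be of class C², and let v : ℝ^d → ℂ be of class C². Define the pointwise expressions A₂ = Re(Δv̄ · (i f v)) + Re(v̄ · Δ(i f v)), A₃ = 2 Re(∇v̄ · ∇(i f v)), and A₄ = 2 Re(v̄ · conj(i f v) · (∇v·∇v)) + 2 Re(v̄² · (∇v · ∇(i f v))). Then |v(x)|² · (2 A₂(x) + 3 A₃(x)) + A₄(x) = 0 for every x ∈ ℝ^d. -/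
open Complex

section helpers
variable {d : ℕ} (j : Fin d) (x : Fin d → ℝ)

lemma pdC_add {w z : (Fin d → ℝ) → ℂ} (hw : DifferentiableAt ℝ w x) (hz : DifferentiableAt ℝ z x) :
    pdC j (fun y => w y + z y) x = pdC j w x + pdC j z x := by
  simp [pdC, fderiv_fun_add hw hz]

lemma pdC_mul {w z : (Fin d → ℝ) → ℂ} (hw : DifferentiableAt ℝ w x) (hz : DifferentiableAt ℝ z x) :
    pdC j (fun y => w y * z y) x = pdC j w x * z x + w x * pdC j z x := by
  simp [pdC, fderiv_fun_mul hw hz, smul_eq_mul]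
  ring

lemma pdC_conj {w : (Fin d → ℝ) → ℂ} :
    pdC j (fun y => (starRingEnd ℂ) (w y)) x = (starRingEnd ℂ) (pdC j w x) := by
  have : pdC j (fun y => star (w y)) x = star (pdC j w x) := by
    unfold pdC; rw [fderiv_star]; simp
  simpa using this

lemma pdC_ofReal {g : (Fin d → ℝ) → ℝ} (hg : DifferentiableAt ℝ g x) :
    pdC j (fun y => (g y : ℂ)) x = (pdR j g x : ℂ) := by
  have := (Complex.ofRealCLM.hasFDerivAt.comp x hg.hasFDerivAt).fderiv
  simp only [pdC, pdR]
  rw [show (fun y => (g y : ℂ)) = (Complex.ofRealCLM ∘ g) from rfl, this]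
  simp

lemma pdC_const_mul {w : (Fin d → ℝ) → ℂ} (c : ℂ) (hw : DifferentiableAt ℝ w x) :
    pdC j (fun y => c * w y) x = c * pdC j w x := by
  simp [pdC, fderiv_const_mul hw c]

/-- differentiability of the first partials -/
lemma diff_pdC {w : (Fin d → ℝ) → ℂ} (hw : ContDiff ℝ 2 w) :
    Differentiable ℝ (fun y => pdC j w y) := by
  have h1 : ContDiff ℝ 1 (fderiv ℝ w) := hw.fderiv_right (by norm_num)
  have : Differentiable ℝ (fun y => (ContinuousLinearMap.apply ℝ ℂ (Pi.single j 1 : Fin d → ℝ))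
      (fderiv ℝ w y)) :=
    (ContinuousLinearMap.apply ℝ ℂ (Pi.single j 1 : Fin d → ℝ)).differentiable.comp
      (h1.differentiable one_ne_zero)
  simpa [pdC] using this

lemma diff_pdR {g : (Fin d → ℝ) → ℝ} (hg : ContDiff ℝ 2 g) :
    Differentiable ℝ (fun y => pdR j g y) := by
  have h1 : ContDiff ℝ 1 (fderiv ℝ g) := hg.fderiv_right (by norm_num)
  have : Differentiable ℝ (fun y => (ContinuousLinearMap.apply ℝ ℝ (Pi.single j 1 : Fin d → ℝ))
      (fderiv ℝ g y)) :=
    (ContinuousLinearMap.apply ℝ ℝ (Pi.single j 1 : Fin d → ℝ)).differentiable.comp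
      (h1.differentiable one_ne_zero)
  simpa [pdR] using this

/-- first derivative of `i f v` -/
lemma pdC_ifv {f : (Fin d → ℝ) → ℝ} {v : (Fin d → ℝ) → ℂ}
    (hf : DifferentiableAt ℝ f x) (hv : DifferentiableAt ℝ v x) :
    pdC j (fun y => Complex.I * (f y : ℂ) * v y) x
      = Complex.I * (pdR j f x : ℂ) * v x + Complex.I * (f x : ℂ) * pdC j v x := by
  have hfc : DifferentiableAt ℝ (fun y => (f y : ℂ)) x :=
    Complex.ofRealCLM.differentiableAt.comp x hf
  have h1 : pdC j (fun y => (Complex.I * (f y : ℂ)) * v y) x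
      = pdC j (fun y => Complex.I * (f y : ℂ)) x * v x
        + (Complex.I * (f x : ℂ)) * pdC j v x :=
    pdC_mul j x ((differentiableAt_const _).mul hfc) hv
  rw [show (fun y => Complex.I * (f y : ℂ) * v y) = (fun y => (Complex.I * (f y:ℂ)) * v y) from rfl,
    h1, pdC_const_mul j x _ hfc, pdC_ofReal j x hf]


end helpers


section expand
variable {d : ℕ} (x : Fin d → ℝ) {f : (Fin d → ℝ) → ℝ} {v : (Fin d → ℝ) → ℂ}

lemma lapC_conj (hv : ContDiff ℝ 2 v) :
    lapC (fun y => (starRingEnd ℂ) (v y)) x = (starRingEnd ℂ) (lapC v x) := by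
  unfold lapC
  rw [map_sum]
  refine Finset.sum_congr rfl fun j _ => ?_
  have h1 : (fun y => pdC j (fun z => (starRingEnd ℂ) (v z)) y)
      = fun y => (starRingEnd ℂ) (pdC j v y) := funext fun y => pdC_conj j y
  rw [h1, pdC_conj]

lemma lapC_ifv (hf : ContDiff ℝ 2 f) (hv : ContDiff ℝ 2 v) :
    lapC (fun y => Complex.I * (f y : ℂ) * v y) x
      = Complex.I * (lapR f x : ℂ) * v x
        + 2 * (Complex.I * ∑ j, (pdR j f x : ℂ) * pdC j v x)
        + Complex.I * (f x : ℂ) * lapC v x := by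
  have hfd : Differentiable ℝ f := hf.differentiable two_ne_zero
  have hvd : Differentiable ℝ v := hv.differentiable two_ne_zero
  have key : ∀ j : Fin d, pdC j (fun y => pdC j (fun z => Complex.I * (f z : ℂ) * v z) y) x
      = Complex.I * (pdR j (fun y => pdR j f y) x : ℂ) * v x
        + Complex.I * (pdR j f x : ℂ) * pdC j v x
        + (Complex.I * (pdR j f x : ℂ) * pdC j v x
            + Complex.I * (f x : ℂ) * pdC j (fun y => pdC j v y) x) := by
    intro j
    have h1 : (fun y => pdC j (fun z => Complex.I * (f z : ℂ) * v z) y)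
        = fun y => Complex.I * (pdR j f y : ℂ) * v y
            + Complex.I * (f y : ℂ) * pdC j v y :=
      funext fun y => pdC_ifv j y (hfd y) (hvd y)
    rw [h1]
    have d1 : DifferentiableAt ℝ (fun y => Complex.I * (pdR j f y : ℂ) * v y) x :=
      (((differentiableAt_const _).mul
        (Complex.ofRealCLM.differentiableAt.comp x ((diff_pdR j hf) x))).mul (hvd x))
    have d2' : DifferentiableAt ℝ (fun y => Complex.I * (f y : ℂ) * pdC j v y) x :=
      (((differentiableAt_const _).mul
        (Complex.ofRealCLM.differentiableAt.comp x (hfd x))).mul ((diff_pdC j hv) x))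
    rw [pdC_add j x d1 d2', pdC_ifv j x ((diff_pdR j hf) x) (hvd x),
      pdC_ifv j x (hfd x) ((diff_pdC j hv) x)]
  unfold lapC lapR
  rw [Finset.sum_congr rfl fun j _ => key j]
  push_cast
  simp only [Finset.mul_sum, Finset.sum_mul, ← Finset.sum_add_distrib]
  exact Finset.sum_congr rfl fun j _ => by push_cast; ring

lemma gdot_conj_ifv (hf : ContDiff ℝ 2 f) (hv : ContDiff ℝ 2 v) :
    gdotC (fun y => (starRingEnd ℂ) (v y)) (fun y => Complex.I * (f y : ℂ) * v y) x
      = Complex.I * v x * (starRingEnd ℂ) (∑ j, (pdR j f x : ℂ) * pdC j v x)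
        + Complex.I * (f x : ℂ) * ((∑ j, Complex.normSq (pdC j v x) : ℝ) : ℂ) := by
  have hfd : Differentiable ℝ f := hf.differentiable two_ne_zero
  have hvd : Differentiable ℝ v := hv.differentiable two_ne_zero
  unfold gdotC
  rw [map_sum]
  push_cast
  simp only [Finset.mul_sum, Finset.sum_mul, ← Finset.sum_add_distrib]
  refine Finset.sum_congr rfl fun j _ => ?_
  rw [pdC_conj, pdC_ifv j x (hfd x) (hvd x)]
  rw [map_mul, Complex.conj_ofReal, ← Complex.mul_conj]
  ring

lemma gdot_v_ifv (hf : ContDiff ℝ 2 f) (hv : ContDiff ℝ 2 v) :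
    gdotC v (fun y => Complex.I * (f y : ℂ) * v y) x
      = Complex.I * v x * (∑ j, (pdR j f x : ℂ) * pdC j v x)
        + Complex.I * (f x : ℂ) * gdotC v v x := by
  have hfd : Differentiable ℝ f := hf.differentiable two_ne_zero
  have hvd : Differentiable ℝ v := hv.differentiable two_ne_zero
  unfold gdotC
  simp only [Finset.mul_sum, Finset.sum_mul, ← Finset.sum_add_distrib]
  refine Finset.sum_congr rfl fun j _ => ?_
  rw [pdC_ifv j x (hfd x) (hvd x)]
  ring

end expand

/-- **Combined cancellation identity**:
`|v|² (2 A₂ + 3 A₃) + A₄ = 0` pointwise, where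
`A₂ = Re(Δv̄ · (i f v)) + Re(v̄ · Δ(i f v))`,
`A₃ = 2 Re(∇v̄ · ∇(i f v))`, and
`A₄ = 2 Re(v̄ · conj(i f v) · (∇v·∇v)) + 2 Re(v̄² · (∇v · ∇(i f v)))`. -/
theorem combined_cancellation_identity {d : ℕ} (hd : 1 ≤ d)
    (f : (Fin d → ℝ) → ℝ) (hf : ContDiff ℝ 2 f)
    (v : (Fin d → ℝ) → ℂ) (hv : ContDiff ℝ 2 v) (x : Fin d → ℝ) :
    Complex.normSq (v x) *
        (2 * ((lapC (fun y => (starRingEnd ℂ) (v y)) x * (Complex.I * (f x : ℂ) * v x)).re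
              + ((starRingEnd ℂ) (v x)
                  * lapC (fun y => Complex.I * (f y : ℂ) * v y) x).re)
          + 3 * (2 * (gdotC (fun y => (starRingEnd ℂ) (v y))
                  (fun y => Complex.I * (f y : ℂ) * v y) x).re))
      + (2 * ((starRingEnd ℂ) (v x) * (starRingEnd ℂ) (Complex.I * (f x : ℂ) * v x)
                * gdotC v v x).re
          + 2 * (((starRingEnd ℂ) (v x)) ^ 2
                * gdotC v (fun y => Complex.I * (f y : ℂ) * v y) x).re) = 0 := by
  rw [lapC_conj x hv, lapC_ifv x hf hv, gdot_conj_ifv x hf hv, gdot_v_ifv x hf hv]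
  generalize v x = V
  generalize lapC v x = L
  generalize (∑ j, (pdR j f x : ℂ) * pdC j v x) = S
  generalize gdotC v v x = Q
  generalize f x = c
  generalize lapR f x = Lf
  generalize (∑ j, Complex.normSq (pdC j v x)) = t
  simp only [Complex.normSq_apply, map_mul, Complex.conj_I, Complex.conj_ofReal,
    Complex.mul_re, Complex.mul_im, Complex.add_re, Complex.add_im, Complex.I_re,
    Complex.I_im, Complex.ofReal_re, Complex.ofReal_im, Complex.conj_re, Complex.conj_im,
    Complex.neg_re, Complex.neg_im, Complex.re_ofNat, Complex.im_ofNat, pow_two]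
  ring
end

section
/- Fourth-order splitting of a modified matrix exponential: Let M ≥ 1 and let B, C be complex M × M matrices. Then there exist constants K ≥ 0 and δ > 0 such that for all τ ∈ ℝ with |τ| ≤ δ, ‖ exp(τ(B + τ² C)) − exp((τ/2) B) · exp(τ³ C) · exp((τ/2) B) ‖ ≤ K |τ|⁵, where exp denotes the matrix exponential and ‖·‖ a (sub-multiplicative) matrix norm. -/
attribute [local instance] Matrix.linftyOpNormedRing Matrix.linftyOpNormedAlgebra

open NormedSpace

section AuxSplit

noncomputable def splitQ {A : Type*} [Ring A] [Algebra ℂ A] (B C : A) (t : ℂ) : A :=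
    ((-1 : ℂ) / 128) • (B * B * B * B * B)
    + ((1 : ℂ) / 24) • (B * B * C)
    + ((-1 : ℂ) / 12) • (B * C * B)
    + ((1 : ℂ) / 24) • (C * B * B)
    + (((-5 : ℂ) / 4608) * t ^ 1) • (B * B * B * B * B * B)
    + (((1 : ℂ) / 48) * t ^ 1) • (B * B * B * C)
    + (((-1 : ℂ) / 48) * t ^ 1) • (B * B * C * B)
    + (((-1 : ℂ) / 48) * t ^ 1) • (B * C * B * B)
    + (((1 : ℂ) / 48) * t ^ 1) • (C * B * B * B)
    + (((1 : ℂ) / 2) * t ^ 1) • (C * C)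
    + (((-1 : ℂ) / 9216) * t ^ 2) • (B * B * B * B * B * B * B)
    + (((-1 : ℂ) / 384) * t ^ 2) • (B * B * B * B * C)
    + (((-1 : ℂ) / 96) * t ^ 2) • (B * B * B * C * B)
    + (((-1 : ℂ) / 64) * t ^ 2) • (B * B * C * B * B)
    + (((-1 : ℂ) / 96) * t ^ 2) • (B * C * B * B * B)
    + (((1 : ℂ) / 6) * t ^ 2) • (B * C * C)
    + (((-1 : ℂ) / 384) * t ^ 2) • (C * B * B * B * B)
    + (((1 : ℂ) / 6) * t ^ 2) • (C * B * C)
    + (((1 : ℂ) / 6) * t ^ 2) • (C * C * B)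
    + (((-1 : ℂ) / 147456) * t ^ 3) • (B * B * B * B * B * B * B * B)
    + (((-1 : ℂ) / 768) * t ^ 3) • (B * B * B * B * C * B)
    + (((-1 : ℂ) / 384) * t ^ 3) • (B * B * B * C * B * B)
    + (((-1 : ℂ) / 384) * t ^ 3) • (B * B * C * B * B * B)
    + (((1 : ℂ) / 24) * t ^ 3) • (B * B * C * C)
    + (((-1 : ℂ) / 768) * t ^ 3) • (B * C * B * B * B * B)
    + (((1 : ℂ) / 24) * t ^ 3) • (B * C * B * C)
    + (((1 : ℂ) / 24) * t ^ 3) • (B * C * C * B)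
    + (((1 : ℂ) / 24) * t ^ 3) • (C * B * B * C)
    + (((1 : ℂ) / 24) * t ^ 3) • (C * B * C * B)
    + (((1 : ℂ) / 24) * t ^ 3) • (C * C * B * B)
    + (((-1 : ℂ) / 3072) * t ^ 4) • (B * B * B * B * C * B * B)
    + (((-1 : ℂ) / 2304) * t ^ 4) • (B * B * B * C * B * B * B)
    + (((-1 : ℂ) / 3072) * t ^ 4) • (B * B * C * B * B * B * B)
    + (((1 : ℂ) / 6) * t ^ 4) • (C * C * C)
    + (((-1 : ℂ) / 18432) * t ^ 5) • (B * B * B * B * C * B * B * B)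
    + (((-1 : ℂ) / 18432) * t ^ 5) • (B * B * B * C * B * B * B * B)
    + (((1 : ℂ) / 24) * t ^ 5) • (B * C * C * C)
    + (((1 : ℂ) / 24) * t ^ 5) • (C * B * C * C)
    + (((1 : ℂ) / 24) * t ^ 5) • (C * C * B * C)
    + (((1 : ℂ) / 24) * t ^ 5) • (C * C * C * B)
    + (((-1 : ℂ) / 147456) * t ^ 6) • (B * B * B * B * C * B * B * B * B)
    + (((1 : ℂ) / 24) * t ^ 7) • (C * C * C * C)

variable {A : Type*}

set_option maxHeartbeats 1000000 in
lemma split_identity [Ring A] [Algebra ℂ A] (B C : A) (t : ℂ) :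
    (∑ k ∈ Finset.range 5, ((Nat.factorial k : ℂ))⁻¹ • (t • B + t ^ 3 • C) ^ k)
      - (∑ k ∈ Finset.range 5, ((Nat.factorial k : ℂ))⁻¹ • ((t / 2) • B) ^ k)
        * (∑ k ∈ Finset.range 2, ((Nat.factorial k : ℂ))⁻¹ • (t ^ 3 • C) ^ k)
        * (∑ k ∈ Finset.range 5, ((Nat.factorial k : ℂ))⁻¹ • ((t / 2) • B) ^ k)
    = t ^ 5 • splitQ B C t := by
  simp only [Finset.sum_range_succ, Finset.sum_range_zero, Nat.factorial, Nat.cast_ofNat,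
    Nat.cast_one, Nat.mul_one, Nat.one_mul, zero_add]
  norm_num
  simp only [splitQ, mul_add, add_mul, smul_mul_assoc, mul_smul_comm, smul_smul,
    mul_one, one_mul, smul_add, mul_assoc, pow_succ, pow_zero]
  module

variable [NormedRing A] [NormOneClass A] [NormedAlgebra ℂ A] [CompleteSpace A]

lemma aux_exp_remainder (x : A) (n : ℕ) :
    ‖exp x - ∑ k ∈ Finset.range n, ((Nat.factorial k : ℂ))⁻¹ • x ^ k‖
      ≤ ‖x‖ ^ n * Real.exp ‖x‖ := by
  have hs : Summable fun k : ℕ => ((Nat.factorial k : ℂ))⁻¹ • x ^ k := expSeries_summable' x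
  have hkey : exp x - ∑ k ∈ Finset.range n, ((Nat.factorial k : ℂ))⁻¹ • x ^ k
      = ∑' k : ℕ, ((Nat.factorial (k + n) : ℂ))⁻¹ • x ^ (k + n) := by
    simp only [exp_eq_tsum ℂ]
    rw [show (∑' k : ℕ, ((Nat.factorial k : ℂ))⁻¹ • x ^ k) = _ from
      (Summable.sum_add_tsum_nat_add n hs).symm]
    abel
  rw [hkey]
  have hsn : Summable fun k : ℕ => ‖((Nat.factorial (k + n) : ℂ))⁻¹ • x ^ (k + n)‖ :=
    (summable_nat_add_iff n).mpr (norm_expSeries_summable' x)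
  have hsum2 : Summable fun k : ℕ => ‖x‖ ^ n * (‖x‖ ^ k / Nat.factorial k) :=
    (Real.summable_pow_div_factorial ‖x‖).mul_left _
  have hterm : ∀ k : ℕ, ‖((Nat.factorial (k + n) : ℂ))⁻¹ • x ^ (k + n)‖
      ≤ ‖x‖ ^ n * (‖x‖ ^ k / Nat.factorial k) := by
    intro k
    rw [norm_smul]
    have h1 : ‖((Nat.factorial (k + n) : ℂ))⁻¹‖ = ((Nat.factorial (k + n) : ℝ))⁻¹ := by
      rw [norm_inv]; simp
    rw [h1]
    have h2 : ‖x ^ (k + n)‖ ≤ ‖x‖ ^ (k + n) := norm_pow_le x _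
    have h3 : ((Nat.factorial (k + n) : ℝ))⁻¹ ≤ ((Nat.factorial k : ℝ))⁻¹ := by
      apply inv_anti₀
      · positivity
      · exact_mod_cast Nat.factorial_le (Nat.le_add_right k n)
    calc ((Nat.factorial (k + n) : ℝ))⁻¹ * ‖x ^ (k + n)‖
        ≤ ((Nat.factorial k : ℝ))⁻¹ * ‖x‖ ^ (k + n) :=
          mul_le_mul h3 h2 (norm_nonneg _) (by positivity)
      _ = ‖x‖ ^ n * (‖x‖ ^ k / Nat.factorial k) := by rw [pow_add]; ring
  calc ‖∑' k : ℕ, ((Nat.factorial (k + n) : ℂ))⁻¹ • x ^ (k + n)‖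
      ≤ ∑' k : ℕ, ‖((Nat.factorial (k + n) : ℂ))⁻¹ • x ^ (k + n)‖ := norm_tsum_le_tsum_norm hsn
    _ ≤ ∑' k : ℕ, ‖x‖ ^ n * (‖x‖ ^ k / Nat.factorial k) := Summable.tsum_le_tsum hterm hsn hsum2
    _ = ‖x‖ ^ n * Real.exp ‖x‖ := by
        rw [tsum_mul_left]
        congr 1
        rw [Real.exp_eq_exp_ℝ, exp_eq_tsum_div]

lemma aux_norm_exp_le (x : A) : ‖exp x‖ ≤ Real.exp ‖x‖ := by
  have h := aux_exp_remainder x 0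
  simpa using h

lemma aux_norm_mul3 (a b c : A) : ‖a * b * c‖ ≤ ‖a‖ * ‖b‖ * ‖c‖ :=
  (norm_mul_le _ _).trans (mul_le_mul_of_nonneg_right (norm_mul_le a b) (norm_nonneg c))

end AuxSplit

set_option maxHeartbeats 3000000 in
/-- **Fourth-order splitting of a modified matrix exponential**: for complex
`M × M` matrices `B, C` there are `K ≥ 0` and `δ > 0` such that for `|τ| ≤ δ`,
`‖exp(τ(B + τ²C)) − exp(τB/2) exp(τ³C) exp(τB/2)‖ ≤ K|τ|⁵`. -/
theorem fourth_order_splitting_modified_exponential (M : ℕ) (hM : 1 ≤ M)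
    (B C : Matrix (Fin M) (Fin M) ℂ) :
    ∃ K : ℝ, 0 ≤ K ∧ ∃ δ : ℝ, 0 < δ ∧ ∀ τ : ℝ, |τ| ≤ δ →
      ‖exp ((τ : ℂ) • (B + (τ : ℂ) ^ 2 • C))
        - exp (((τ : ℂ) / 2) • B) * exp (((τ : ℂ) ^ 3) • C)
          * exp (((τ : ℂ) / 2) • B)‖ ≤ K * |τ| ^ 5 := by
  haveI : Nonempty (Fin M) := ⟨⟨0, hM⟩⟩
  -- bound for splitQ on [-1, 1]
  have hqc : Continuous fun τ : ℝ => splitQ B C (τ : ℂ) := by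
    unfold splitQ
    fun_prop
  obtain ⟨KQ, hKQ⟩ := (isCompact_Icc (a := (-1 : ℝ)) (b := 1)).exists_bound_of_continuousOn
    hqc.continuousOn
  have hKQ0 : 0 ≤ KQ := (norm_nonneg _).trans (hKQ 0 (by norm_num))
  set L : ℝ := ‖B‖ + ‖C‖ with hLdef
  have hL0 : (0 : ℝ) ≤ L := by rw [hLdef]; positivity
  set E : ℝ := Real.exp L with hEdef
  have hE0 : (0 : ℝ) ≤ E := (Real.exp_pos L).le
  have hE1 : (1 : ℝ) ≤ E := by rw [hEdef]; exact Real.one_le_exp hL0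
  set U : ℝ := (1 + L ^ 2 + L ^ 5) * E with hUdef
  have hU0 : (0 : ℝ) ≤ U := by rw [hUdef]; positivity
  refine ⟨L ^ 5 * E + KQ + L ^ 5 * E ^ 3 + U * (L ^ 2 * E) * E + U * U * (L ^ 5 * E),
    by positivity, 1, one_pos, ?_⟩
  intro τ hτ
  set r : ℝ := |τ| with hrdef
  have hr0 : (0 : ℝ) ≤ r := abs_nonneg τ
  have hr1 : r ≤ 1 := hτ
  set t : ℂ := (τ : ℂ) with htdef
  have hnt : ‖t‖ = r := by rw [htdef, hrdef]; exact RCLike.norm_ofReal τ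
  -- abbreviations
  set X : Matrix (Fin M) (Fin M) ℂ := t • B + t ^ 3 • C with hXdef
  set Am : Matrix (Fin M) (Fin M) ℂ := (t / 2) • B with hAdef
  set G : Matrix (Fin M) (Fin M) ℂ := t ^ 3 • C with hGdef
  set SX : Matrix (Fin M) (Fin M) ℂ :=
    ∑ k ∈ Finset.range 5, ((Nat.factorial k : ℂ))⁻¹ • X ^ k with hSXdef
  set SA : Matrix (Fin M) (Fin M) ℂ :=
    ∑ k ∈ Finset.range 5, ((Nat.factorial k : ℂ))⁻¹ • Am ^ k with hSAdef
  set SG : Matrix (Fin M) (Fin M) ℂ :=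
    ∑ k ∈ Finset.range 2, ((Nat.factorial k : ℂ))⁻¹ • G ^ k with hSGdef
  -- basic norm bounds
  have hXn : ‖X‖ ≤ r * L := by
    rw [hXdef]
    refine (norm_add_le _ _).trans ?_
    rw [norm_smul, norm_smul, norm_pow, hnt, hLdef]
    have h3 : r ^ 3 ≤ r := pow_le_of_le_one hr0 hr1 (by norm_num)
    nlinarith [norm_nonneg B, norm_nonneg C]
  have hXL : ‖X‖ ≤ L := hXn.trans (by nlinarith)
  have hAn : ‖Am‖ ≤ r * L := by
    rw [hAdef, norm_smul, norm_div, hnt]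
    have : ‖(2 : ℂ)‖ = 2 := by norm_num
    rw [this, hLdef]
    nlinarith [norm_nonneg B, norm_nonneg C]
  have hAL : ‖Am‖ ≤ L := hAn.trans (by nlinarith)
  have hGn : ‖G‖ = r ^ 3 * ‖C‖ := by rw [hGdef, norm_smul, norm_pow, hnt]
  have hGL : ‖G‖ ≤ L := by
    rw [hGn, hLdef]
    have h3 : r ^ 3 ≤ 1 := pow_le_one₀ hr0 hr1
    nlinarith [norm_nonneg B, norm_nonneg C]
  -- remainder bounds
  have hRX : ‖exp X - SX‖ ≤ L ^ 5 * E * r ^ 5 := by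
    refine (aux_exp_remainder X 5).trans ?_
    have h1 : ‖X‖ ^ 5 ≤ (r * L) ^ 5 := pow_le_pow_left₀ (norm_nonneg _) hXn 5
    have h2 : Real.exp ‖X‖ ≤ E := by rw [hEdef]; exact Real.exp_le_exp.2 hXL
    calc ‖X‖ ^ 5 * Real.exp ‖X‖ ≤ (r * L) ^ 5 * E :=
          mul_le_mul h1 h2 (Real.exp_pos _).le (by positivity)
      _ = L ^ 5 * E * r ^ 5 := by ring
  have hRA : ‖exp Am - SA‖ ≤ L ^ 5 * E * r ^ 5 := by
    refine (aux_exp_remainder Am 5).trans ?_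
    have h1 : ‖Am‖ ^ 5 ≤ (r * L) ^ 5 := pow_le_pow_left₀ (norm_nonneg _) hAn 5
    have h2 : Real.exp ‖Am‖ ≤ E := by rw [hEdef]; exact Real.exp_le_exp.2 hAL
    calc ‖Am‖ ^ 5 * Real.exp ‖Am‖ ≤ (r * L) ^ 5 * E :=
          mul_le_mul h1 h2 (Real.exp_pos _).le (by positivity)
      _ = L ^ 5 * E * r ^ 5 := by ring
  have hRC : ‖exp G - SG‖ ≤ L ^ 2 * E * r ^ 5 := by
    refine (aux_exp_remainder G 2).trans ?_
    have h1 : ‖G‖ ^ 2 ≤ r ^ 5 * L ^ 2 := by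
      rw [hGn]
      have h56 : r ^ 6 ≤ r ^ 5 := pow_le_pow_of_le_one hr0 hr1 (by norm_num)
      have hC : ‖C‖ ≤ L := by rw [hLdef]; nlinarith [norm_nonneg B]
      have : (r ^ 3 * ‖C‖) ^ 2 = r ^ 6 * ‖C‖ ^ 2 := by ring
      rw [this]
      have h2 : ‖C‖ ^ 2 ≤ L ^ 2 := pow_le_pow_left₀ (norm_nonneg _) hC 2
      nlinarith [pow_nonneg hr0 6, pow_nonneg hr0 5, sq_nonneg ‖C‖]
    have h2 : Real.exp ‖G‖ ≤ E := by rw [hEdef]; exact Real.exp_le_exp.2 hGL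
    calc ‖G‖ ^ 2 * Real.exp ‖G‖ ≤ (r ^ 5 * L ^ 2) * E :=
          mul_le_mul h1 h2 (Real.exp_pos _).le (by positivity)
      _ = L ^ 2 * E * r ^ 5 := by ring
  -- factor bounds
  have heA : ‖exp Am‖ ≤ E := (aux_norm_exp_le Am).trans (by rw [hEdef]; exact Real.exp_le_exp.2 hAL)
  have heG : ‖exp G‖ ≤ E := (aux_norm_exp_le G).trans (by rw [hEdef]; exact Real.exp_le_exp.2 hGL)
  have hSAn : ‖SA‖ ≤ U := by
    have h1 : SA = exp Am - (exp Am - SA) := by abel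
    rw [h1]
    refine (norm_sub_le _ _).trans ?_
    have h3 : r ^ 5 ≤ 1 := pow_le_one₀ hr0 hr1
    have h2 : L ^ 5 * E * r ^ 5 ≤ L ^ 5 * E := by
      calc L ^ 5 * E * r ^ 5 ≤ L ^ 5 * E * 1 :=
            mul_le_mul_of_nonneg_left h3 (mul_nonneg (pow_nonneg hL0 5) hE0)
        _ = L ^ 5 * E := mul_one _
    have h4 : ‖exp Am - SA‖ ≤ L ^ 5 * E := hRA.trans h2
    have h5 : 0 ≤ L ^ 2 * E := mul_nonneg (pow_nonneg hL0 2) hE0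
    rw [hUdef]
    nlinarith [heA]
  have hSGn : ‖SG‖ ≤ U := by
    have h1 : SG = exp G - (exp G - SG) := by abel
    rw [h1]
    refine (norm_sub_le _ _).trans ?_
    have h3 : r ^ 5 ≤ 1 := pow_le_one₀ hr0 hr1
    have h2 : L ^ 2 * E * r ^ 5 ≤ L ^ 2 * E := by
      calc L ^ 2 * E * r ^ 5 ≤ L ^ 2 * E * 1 :=
            mul_le_mul_of_nonneg_left h3 (mul_nonneg (pow_nonneg hL0 2) hE0)
        _ = L ^ 2 * E := mul_one _
    have h4 : ‖exp G - SG‖ ≤ L ^ 2 * E := hRC.trans h2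
    have h5 : 0 ≤ L ^ 5 * E := mul_nonneg (pow_nonneg hL0 5) hE0
    rw [hUdef]
    nlinarith [heG]
  -- the polynomial term
  have hpoly : ‖SX - SA * SG * SA‖ ≤ KQ * r ^ 5 := by
    have hid : SX - SA * SG * SA = t ^ 5 • splitQ B C t := by
      rw [hSXdef, hSAdef, hSGdef, hXdef, hAdef, hGdef]
      exact split_identity B C t
    rw [hid, norm_smul, norm_pow, hnt]
    have hmem : τ ∈ Set.Icc (-1 : ℝ) 1 := abs_le.mp hτ
    have := hKQ τ hmem
    rw [mul_comm]
    exact mul_le_mul_of_nonneg_right this (by positivity)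
  -- decomposition
  have harg : t • (B + t ^ 2 • C) = X := by rw [hXdef]; module
  have hdecomp : exp X - exp Am * exp G * exp Am
      = (exp X - SX) + (SX - SA * SG * SA)
        - (exp Am - SA) * exp G * exp Am
        - SA * (exp G - SG) * exp Am
        - SA * SG * (exp Am - SA) := by noncomm_ring
  -- product bounds
  have hP1 : ‖(exp Am - SA) * exp G * exp Am‖ ≤ L ^ 5 * E ^ 3 * r ^ 5 := by
    refine (aux_norm_mul3 _ _ _).trans ?_
    calc ‖exp Am - SA‖ * ‖exp G‖ * ‖exp Am‖
        ≤ (L ^ 5 * E * r ^ 5) * E * E := by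
          refine mul_le_mul (mul_le_mul hRA heG (norm_nonneg _) (by positivity)) heA
            (norm_nonneg _) (by positivity)
      _ = L ^ 5 * E ^ 3 * r ^ 5 := by ring
  have hP2 : ‖SA * (exp G - SG) * exp Am‖ ≤ U * (L ^ 2 * E) * E * r ^ 5 := by
    refine (aux_norm_mul3 _ _ _).trans ?_
    calc ‖SA‖ * ‖exp G - SG‖ * ‖exp Am‖
        ≤ U * (L ^ 2 * E * r ^ 5) * E :=
          mul_le_mul (mul_le_mul hSAn hRC (norm_nonneg _) hU0) heA (norm_nonneg _)
            (by positivity)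
      _ = U * (L ^ 2 * E) * E * r ^ 5 := by ring
  have hP3 : ‖SA * SG * (exp Am - SA)‖ ≤ U * U * (L ^ 5 * E) * r ^ 5 := by
    refine (aux_norm_mul3 _ _ _).trans ?_
    calc ‖SA‖ * ‖SG‖ * ‖exp Am - SA‖
        ≤ U * U * (L ^ 5 * E * r ^ 5) :=
          mul_le_mul (mul_le_mul hSAn hSGn (norm_nonneg _) hU0) hRA (norm_nonneg _)
            (by positivity)
      _ = U * U * (L ^ 5 * E) * r ^ 5 := by ring
  -- assemble
  rw [harg]
  rw [show exp (t ^ 3 • C) = exp G from by rw [hGdef],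
    show exp ((t / 2) • B) = exp Am from by rw [hAdef]]
  rw [hdecomp]
  calc ‖(exp X - SX) + (SX - SA * SG * SA)
        - (exp Am - SA) * exp G * exp Am
        - SA * (exp G - SG) * exp Am
        - SA * SG * (exp Am - SA)‖
      ≤ ‖(exp X - SX) + (SX - SA * SG * SA)
        - (exp Am - SA) * exp G * exp Am
        - SA * (exp G - SG) * exp Am‖ + ‖SA * SG * (exp Am - SA)‖ := norm_sub_le _ _
    _ ≤ (‖(exp X - SX) + (SX - SA * SG * SA)
        - (exp Am - SA) * exp G * exp Am‖ + ‖SA * (exp G - SG) * exp Am‖)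
        + ‖SA * SG * (exp Am - SA)‖ :=
          add_le_add_left (norm_sub_le _ _) _
    _ ≤ ((‖(exp X - SX) + (SX - SA * SG * SA)‖
        + ‖(exp Am - SA) * exp G * exp Am‖) + ‖SA * (exp G - SG) * exp Am‖)
        + ‖SA * SG * (exp Am - SA)‖ := by
          refine add_le_add_left (add_le_add_left (norm_sub_le _ _) _) _
    _ ≤ (((‖exp X - SX‖ + ‖SX - SA * SG * SA‖)
        + ‖(exp Am - SA) * exp G * exp Am‖) + ‖SA * (exp G - SG) * exp Am‖)
        + ‖SA * SG * (exp Am - SA)‖ := by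
          refine add_le_add_left (add_le_add_left (add_le_add_left (norm_add_le _ _) _) _) _
    _ ≤ (((L ^ 5 * E * r ^ 5 + KQ * r ^ 5) + L ^ 5 * E ^ 3 * r ^ 5)
        + U * (L ^ 2 * E) * E * r ^ 5) + U * U * (L ^ 5 * E) * r ^ 5 := by
          exact add_le_add (add_le_add (add_le_add (add_le_add hRX hpoly) hP1) hP2) hP3
    _ = (L ^ 5 * E + KQ + L ^ 5 * E ^ 3 + U * (L ^ 2 * E) * E + U * U * (L ^ 5 * E)) * r ^ 5 := by
          ring
end

section
/- Taylor expansion of the complex cubic flow: Let b ∈ ℂ, u₀ ∈ ℂ, δ > 0, and let u : (−δ, δ) → ℂ be five times continuously differentiable with u(0) = u₀ and u′(t) = b |u(t)|² u(t) for all t ∈ (−δ, δ). Then there exist K ≥ 0 and δ′ ∈ (0, δ] such that for all τ with |τ| ≤ δ′, | u(τ) − ( 1 + b τ |u₀|² + (b² + (1/2)|b|²) τ² |u₀|⁴ + (b³ + ((7/6) b + (1/3) b̄)|b|²) τ³ |u₀|⁶ + (b⁴ + (1/24)(46 b² + 6 b̄² + 29 |b|²)|b|²) τ⁴ |u₀|⁸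 ) u₀ | ≤ K |τ|⁵. -/
private lemma npow_aux {f : ℝ → ℂ} {f' : ℂ} {t : ℝ} (n : ℕ) (hf : HasDerivAt f f' t) :
    HasDerivAt (fun y => f y ^ n) ((n : ℂ) * f t ^ (n - 1) * f') t := by
  have h := (hasDerivAt_pow n (f t)).scomp t hf
  convert h using 1
  · rfl
  · rfl
  simp [smul_eq_mul]
  ring

private lemma mvt_step {f f' : ℝ → ℂ} {a C : ℝ} {n : ℕ} (hC : 0 ≤ C)
    (hf : ∀ t ∈ Set.Icc (-a) a, HasDerivAt f (f' t) t)
    (h0 : f 0 = 0)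
    (hb : ∀ t ∈ Set.Icc (-a) a, ‖f' t‖ ≤ C * |t| ^ n) :
    ∀ t ∈ Set.Icc (-a) a, ‖f t‖ ≤ C * |t| ^ (n + 1) := by
  intro t ht
  have habs : ∀ x ∈ Set.uIcc (0 : ℝ) t, |x| ≤ |t| := by
    intro x hx
    rcases Set.mem_uIcc.mp hx with ⟨h1, h2⟩ | ⟨h1, h2⟩ <;>
      (rw [abs_le]; constructor <;> linarith [neg_abs_le t, le_abs_self t])
  have hsub : Set.uIcc (0 : ℝ) t ⊆ Set.Icc (-a) a := by
    intro x hx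
    have h1 := habs x hx
    have h2 : |t| ≤ a := abs_le.2 ⟨ht.1, ht.2⟩
    have := abs_le.1 (h1.trans h2)
    exact ⟨this.1, this.2⟩
  have key := (convex_uIcc (0 : ℝ) t).norm_image_sub_le_of_norm_hasDerivWithin_le
    (f := f) (f' := f') (C := C * |t| ^ n)
    (fun x hx => (hf x (hsub hx)).hasDerivWithinAt)
    (fun x hx => (hb x (hsub hx)).trans (mul_le_mul_of_nonneg_left (pow_le_pow_left₀ (abs_nonneg x) (habs x hx) n) hC))
    Set.left_mem_uIcc Set.right_mem_uIcc
  rw [h0, sub_zero, sub_zero, Real.norm_eq_abs] at key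
  calc ‖f t‖ ≤ C * |t| ^ n * |t| := key
    _ = C * |t| ^ (n + 1) := by rw [pow_succ]; ring

/-- **Taylor expansion of the complex cubic flow**: if `u` is `C⁵` on `(−δ, δ)`
with `u(0) = u₀` and `u′ = b|u|²u`, then
`u(τ) = (1 + bτ|u₀|² + (b² + |b|²/2)τ²|u₀|⁴ + (b³ + ((7/6)b + (1/3)b̄)|b|²)τ³|u₀|⁶
  + (b⁴ + (1/24)(46b² + 6b̄² + 29|b|²)|b|²)τ⁴|u₀|⁸)u₀ + O(τ⁵)`. -/
theorem taylor_expansion_complex_cubic_flow (b : ℂ) (u₀ : ℂ) (δ : ℝ) (hδ : 0 < δ)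
    (u : ℝ → ℂ) (hu : ContDiffOn ℝ 5 u (Set.Ioo (-δ) δ))
    (h0 : u 0 = u₀)
    (hode : ∀ t ∈ Set.Ioo (-δ) δ,
      HasDerivAt u (b * (Complex.normSq (u t) : ℂ) * u t) t) :
    ∃ K : ℝ, 0 ≤ K ∧ ∃ δ' ∈ Set.Ioc (0 : ℝ) δ, ∀ τ : ℝ, |τ| ≤ δ' →
      ‖u τ -
        (1 + b * (τ : ℂ) * (Complex.normSq u₀ : ℂ)
          + (b ^ 2 + (1 / 2) * (Complex.normSq b : ℂ)) * (τ : ℂ) ^ 2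
              * (Complex.normSq u₀ : ℂ) ^ 2
          + (b ^ 3 + ((7 / 6) * b + (1 / 3) * (starRingEnd ℂ) b)
                * (Complex.normSq b : ℂ)) * (τ : ℂ) ^ 3 * (Complex.normSq u₀ : ℂ) ^ 3
          + (b ^ 4 + (1 / 24) * (46 * b ^ 2 + 6 * ((starRingEnd ℂ) b) ^ 2
                + 29 * (Complex.normSq b : ℂ)) * (Complex.normSq b : ℂ))
              * (τ : ℂ) ^ 4 * (Complex.normSq u₀ : ℂ) ^ 4) * u₀‖
        ≤ K * |τ| ^ 5 := by
  obtain ⟨g2, hg2⟩ : ∃ g : ℂ, g = b * (2 * b + star b) := ⟨_, rfl⟩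
  obtain ⟨g3, hg3⟩ : ∃ g : ℂ, g = g2 * (3 * b + 2 * star b) := ⟨_, rfl⟩
  obtain ⟨g4, hg4⟩ : ∃ g : ℂ, g = g3 * (4 * b + 3 * star b) := ⟨_, rfl⟩
  obtain ⟨g5, hg5⟩ : ∃ g : ℂ, g = g4 * (5 * b + 4 * star b) := ⟨_, rfl⟩
  set a : ℝ := δ / 2 with ha
  have ha0 : 0 < a := by positivity
  set s : Set ℝ := Set.Icc (-a) a with hs
  have hsub : s ⊆ Set.Ioo (-δ) δ := by
    intro t ht
    constructor
    · have := ht.1; simp only [ha] at *; linarith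
    · have := ht.2; simp only [ha] at *; linarith
  -- basic derivatives
  have hU : ∀ t ∈ s, HasDerivAt u (b * u t ^ 2 * star (u t)) t := by
    intro t ht
    have h := hode t (hsub ht)
    convert h using 1
    rw [← Complex.mul_conj, starRingEnd_apply]
    ring
  have hV : ∀ t ∈ s, HasDerivAt (fun y => star (u y)) (star b * star (u t) ^ 2 * u t) t := by
    intro t ht
    have h := (hU t ht).star
    convert h using 1
    · rfl
    simp only [star_mul, star_pow, star_star]
    ring
  set w : ℂ := star u₀ with hw
  -- the remainder functions and their derivative chain
  have hR4 : ∀ t ∈ s, HasDerivAt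
      (fun y => g4 * u y ^ 5 * star (u y) ^ 4 - g4 * u₀ ^ 5 * w ^ 4)
      (g5 * u t ^ 6 * star (u t) ^ 5) t := by
    intro t ht
    have h := (((npow_aux 5 (hU t ht)).const_mul g4).mul (npow_aux 4 (hV t ht))).sub_const
      (g4 * u₀ ^ 5 * w ^ 4)
    convert h using 1
    · rfl
    · rfl
    simp only [hg5]
    push_cast
    ring
  have hR3 : ∀ t ∈ s, HasDerivAt
      (fun y => g3 * u y ^ 4 * star (u y) ^ 3
        - (g3 * u₀ ^ 4 * w ^ 3 + g4 * u₀ ^ 5 * w ^ 4 * (y : ℂ)))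
      (g4 * u t ^ 5 * star (u t) ^ 4 - g4 * u₀ ^ 5 * w ^ 4) t := by
    intro t ht
    have hX : HasDerivAt (fun y : ℝ => (y : ℂ)) 1 t := (hasDerivAt_id t).ofReal_comp
    have h := (((npow_aux 4 (hU t ht)).const_mul g3).mul (npow_aux 3 (hV t ht))).sub
      ((hX.const_mul (g4 * u₀ ^ 5 * w ^ 4)).const_add (g3 * u₀ ^ 4 * w ^ 3))
    convert h using 1
    · rfl
    · rfl
    simp only [hg4]
    push_cast
    ring
  have hR2 : ∀ t ∈ s, HasDerivAt
      (fun y => g2 * u y ^ 3 * star (u y) ^ 2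
        - (g2 * u₀ ^ 3 * w ^ 2 + g3 * u₀ ^ 4 * w ^ 3 * (y : ℂ)
          + g4 * u₀ ^ 5 * w ^ 4 * (y : ℂ) ^ 2 / 2))
      (g3 * u t ^ 4 * star (u t) ^ 3
        - (g3 * u₀ ^ 4 * w ^ 3 + g4 * u₀ ^ 5 * w ^ 4 * (t : ℂ))) t := by
    intro t ht
    have hX : HasDerivAt (fun y : ℝ => (y : ℂ)) 1 t := (hasDerivAt_id t).ofReal_comp
    have h := (((npow_aux 3 (hU t ht)).const_mul g2).mul (npow_aux 2 (hV t ht))).sub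
      (((hX.const_mul (g3 * u₀ ^ 4 * w ^ 3)).const_add (g2 * u₀ ^ 3 * w ^ 2)).add
        (((npow_aux 2 hX).const_mul (g4 * u₀ ^ 5 * w ^ 4)).div_const 2))
    convert h using 1
    · rfl
    · rfl
    simp only [hg3]
    push_cast
    ring
  have hR1 : ∀ t ∈ s, HasDerivAt
      (fun y => b * u y ^ 2 * star (u y)
        - (b * u₀ ^ 2 * w + g2 * u₀ ^ 3 * w ^ 2 * (y : ℂ)
          + g3 * u₀ ^ 4 * w ^ 3 * (y : ℂ) ^ 2 / 2
          + g4 * u₀ ^ 5 * w ^ 4 * (y : ℂ) ^ 3 / 6))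
      (g2 * u t ^ 3 * star (u t) ^ 2
        - (g2 * u₀ ^ 3 * w ^ 2 + g3 * u₀ ^ 4 * w ^ 3 * (t : ℂ)
          + g4 * u₀ ^ 5 * w ^ 4 * (t : ℂ) ^ 2 / 2)) t := by
    intro t ht
    have hX : HasDerivAt (fun y : ℝ => (y : ℂ)) 1 t := (hasDerivAt_id t).ofReal_comp
    have h := (((npow_aux 2 (hU t ht)).const_mul b).mul (hV t ht)).sub
      ((((hX.const_mul (g2 * u₀ ^ 3 * w ^ 2)).const_add (b * u₀ ^ 2 * w)).add
        (((npow_aux 2 hX).const_mul (g3 * u₀ ^ 4 * w ^ 3)).div_const 2)).add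
        (((npow_aux 3 hX).const_mul (g4 * u₀ ^ 5 * w ^ 4)).div_const 6))
    convert h using 1
    · rfl
    · rfl
    simp only [hg2]
    push_cast
    ring
  have hR0 : ∀ t ∈ s, HasDerivAt
      (fun y => u y
        - (u₀ + b * u₀ ^ 2 * w * (y : ℂ) + g2 * u₀ ^ 3 * w ^ 2 * (y : ℂ) ^ 2 / 2
          + g3 * u₀ ^ 4 * w ^ 3 * (y : ℂ) ^ 3 / 6
          + g4 * u₀ ^ 5 * w ^ 4 * (y : ℂ) ^ 4 / 24))
      (b * u t ^ 2 * star (u t)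
        - (b * u₀ ^ 2 * w + g2 * u₀ ^ 3 * w ^ 2 * (t : ℂ)
          + g3 * u₀ ^ 4 * w ^ 3 * (t : ℂ) ^ 2 / 2
          + g4 * u₀ ^ 5 * w ^ 4 * (t : ℂ) ^ 3 / 6)) t := by
    intro t ht
    have hX : HasDerivAt (fun y : ℝ => (y : ℂ)) 1 t := (hasDerivAt_id t).ofReal_comp
    have h := (hU t ht).sub
      (((((hX.const_mul (b * u₀ ^ 2 * w)).const_add u₀).add
        (((npow_aux 2 hX).const_mul (g2 * u₀ ^ 3 * w ^ 2)).div_const 2)).add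
        (((npow_aux 3 hX).const_mul (g3 * u₀ ^ 4 * w ^ 3)).div_const 6)).add
        (((npow_aux 4 hX).const_mul (g4 * u₀ ^ 5 * w ^ 4)).div_const 24))
    convert h using 1
    · rfl
    · rfl
    push_cast
    ring
  -- bound on the top derivative
  have hucont : ContinuousOn u s := fun t ht => (hU t ht).continuousAt.continuousWithinAt
  have hcont : ContinuousOn (fun t => g5 * u t ^ 6 * star (u t) ^ 5) s := by
    exact ((continuousOn_const.mul (hucont.pow 6)).mul
      ((continuous_star.comp_continuousOn hucont).pow 5))
  obtain ⟨M, hM⟩ := (isCompact_Icc (a := -a) (b := a)).exists_bound_of_continuousOn hcont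
  have h0s : (0 : ℝ) ∈ s := ⟨by linarith, by linarith⟩
  have hM0 : 0 ≤ M := le_trans (norm_nonneg _) (hM 0 h0s)
  -- the chain of bounds
  have B5 : ∀ t ∈ s, ‖g5 * u t ^ 6 * star (u t) ^ 5‖ ≤ M * |t| ^ (0 : ℕ) := by
    intro t ht; simpa using hM t ht
  have B4 := mvt_step hM0 hR4 (by simp [h0, hw]) B5
  have B3 := mvt_step hM0 hR3 (by simp [h0, hw]) B4
  have B2 := mvt_step hM0 hR2 (by simp [h0, hw]) B3
  have B1 := mvt_step hM0 hR1 (by simp [h0, hw]) B2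
  have B0 := mvt_step hM0 hR0 (by simp [h0, hw]) B1
  refine ⟨M, hM0, a, ⟨ha0, by simp only [ha]; linarith⟩, ?_⟩
  intro τ hτ
  have hτs : τ ∈ s := abs_le.1 hτ
  have hb0 := B0 τ hτs
  have hnu : ((Complex.normSq u₀ : ℝ) : ℂ) = u₀ * w := by
    rw [← Complex.mul_conj, starRingEnd_apply, hw]
  have hnb : ((Complex.normSq b : ℝ) : ℂ) = b * star b := by
    rw [← Complex.mul_conj, starRingEnd_apply]
  have hEq : u τ -
      (1 + b * (τ : ℂ) * (Complex.normSq u₀ : ℂ)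
        + (b ^ 2 + (1 / 2) * (Complex.normSq b : ℂ)) * (τ : ℂ) ^ 2
            * (Complex.normSq u₀ : ℂ) ^ 2
        + (b ^ 3 + ((7 / 6) * b + (1 / 3) * (starRingEnd ℂ) b)
              * (Complex.normSq b : ℂ)) * (τ : ℂ) ^ 3 * (Complex.normSq u₀ : ℂ) ^ 3
        + (b ^ 4 + (1 / 24) * (46 * b ^ 2 + 6 * ((starRingEnd ℂ) b) ^ 2
              + 29 * (Complex.normSq b : ℂ)) * (Complex.normSq b : ℂ))
            * (τ : ℂ) ^ 4 * (Complex.normSq u₀ : ℂ) ^ 4) * u₀ =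
      u τ - (u₀ + b * u₀ ^ 2 * w * (τ : ℂ) + g2 * u₀ ^ 3 * w ^ 2 * (τ : ℂ) ^ 2 / 2
        + g3 * u₀ ^ 4 * w ^ 3 * (τ : ℂ) ^ 3 / 6
        + g4 * u₀ ^ 5 * w ^ 4 * (τ : ℂ) ^ 4 / 24) := by
    simp only [hg4, hg3, hg2, hnu, hnb, starRingEnd_apply]
    ring
  rw [hEq]
  calc ‖_‖ ≤ M * |τ| ^ (0 + 1 + 1 + 1 + 1 + 1) := hb0
    _ = M * |τ| ^ 5 := by norm_num
end
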